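/- arXiv:1705.07235 — 5 statements merged into one kernel-verified Lean document; each statement's English description precedes it below -/
import Mathlib

section
/- If c_1,...,c_N are real numbers with 0 < m ≤ c_k ≤ M for all k, the product of the c_k is at least C, and m^N ≤ C ≤ M^N, then the sum of 1/c_k^2 over k is at most (N-v)/m^2 + (v-1)/M^2 + (m^{N-v} M^{v-1}/C)^2, where v is the least integer j such that M^j m^{N-j} ≥ C. -/
open Finset

private lemma key_smooth (m M : ℝ) (hm : 0 < m) (hmM : m ≤ M) :
    ∀ n (c : Fin (n+1) → ℝ), (∀ k, m ≤ c k ∧ c k ≤ M) →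
    ∃ a b : ℕ, ∃ t : ℝ, a + b + 1 = n + 1 ∧ m ≤ t ∧ t ≤ M ∧
      m ^ a * M ^ b * t = ∏ k, c k ∧
      ∑ k, 1 / (c k) ^ 2 ≤ (a : ℝ) / m ^ 2 + (b : ℝ) / M ^ 2 + 1 / t ^ 2 := by
  have hM0 : 0 < M := lt_of_lt_of_le hm hmM
  intro n
  induction n with
  | zero =>
    intro c hc
    exact ⟨0, 0, c 0, by norm_num, (hc 0).1, (hc 0).2, by simp, by simp⟩
  | succ n ih =>
    intro c hc
    obtain ⟨a, b, t, hab, htm, htM, hprod, hsum⟩ := ih (fun i => c i.castSucc)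
      (fun i => hc i.castSucc)
    set x := c (Fin.last (n+1)) with hx
    have hxm : m ≤ x := (hc _).1
    have hxM : x ≤ M := (hc _).2
    have ht0 : 0 < t := lt_of_lt_of_le hm htm
    have hx0 : 0 < x := lt_of_lt_of_le hm hxm
    have hps : (∏ k : Fin (n+2), c k) = (∏ i : Fin (n+1), c i.castSucc) * x :=
      Fin.prod_univ_castSucc c
    have hss : (∑ k : Fin (n+2), 1 / (c k) ^ 2) =
        (∑ i : Fin (n+1), 1 / (c i.castSucc) ^ 2) + 1 / x ^ 2 :=
      Fin.sum_univ_castSucc (fun k => 1 / (c k) ^ 2)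
    by_cases hcase : m * M ≤ t * x
    · refine ⟨a, b + 1, t * x / M, by omega, ?_, ?_, ?_, ?_⟩
      · rw [le_div_iff₀ hM0]; nlinarith
      · rw [div_le_iff₀ hM0]; nlinarith
      · rw [hps, ← hprod, pow_succ]; field_simp
      · rw [hss]
        have h1 : 1 / t ^ 2 + 1 / x ^ 2 ≤ 1 / M ^ 2 + 1 / (t * x / M) ^ 2 := by
          rw [← sub_nonneg]
          have e : 1 / M ^ 2 + 1 / (t * x / M) ^ 2 - (1 / t ^ 2 + 1 / x ^ 2) =
              (M ^ 2 - t ^ 2) * (M ^ 2 - x ^ 2) / (M ^ 2 * t ^ 2 * x ^ 2) := by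
            field_simp; ring
          rw [e]
          apply div_nonneg _ (by positivity)
          have h2 : t ^ 2 ≤ M ^ 2 := pow_le_pow_left₀ ht0.le htM 2
          have h3 : x ^ 2 ≤ M ^ 2 := pow_le_pow_left₀ hx0.le hxM 2
          nlinarith
        push_cast
        have hb' : ((b:ℝ) + 1) / M ^ 2 = (b:ℝ) / M ^ 2 + 1 / M ^ 2 := by ring
        linarith
    · push_neg at hcase
      refine ⟨a + 1, b, t * x / m, by omega, ?_, ?_, ?_, ?_⟩
      · rw [le_div_iff₀ hm]; nlinarith
      · rw [div_le_iff₀ hm]; nlinarith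
      · rw [hps, ← hprod, pow_succ]; field_simp
      · rw [hss]
        have h1 : 1 / t ^ 2 + 1 / x ^ 2 ≤ 1 / m ^ 2 + 1 / (t * x / m) ^ 2 := by
          rw [← sub_nonneg]
          have e : 1 / m ^ 2 + 1 / (t * x / m) ^ 2 - (1 / t ^ 2 + 1 / x ^ 2) =
              (t ^ 2 - m ^ 2) * (x ^ 2 - m ^ 2) / (m ^ 2 * t ^ 2 * x ^ 2) := by
            field_simp; ring
          rw [e]
          apply div_nonneg _ (by positivity)
          have h2 : m ^ 2 ≤ t ^ 2 := pow_le_pow_left₀ hm.le htm 2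
          have h3 : m ^ 2 ≤ x ^ 2 := pow_le_pow_left₀ hm.le hxm 2
          nlinarith
        push_cast
        have ha' : ((a:ℝ) + 1) / m ^ 2 = (a:ℝ) / m ^ 2 + 1 / m ^ 2 := by ring
        linarith

theorem stmt_0 (N : ℕ) (hN : 0 < N) (c : Fin N → ℝ) (m M C : ℝ)
    (hm : 0 < m) (hmM : m ≤ M)
    (hc : ∀ k, m ≤ c k ∧ c k ≤ M)
    (hprod : C ≤ ∏ k, c k)
    (hCl : m ^ N ≤ C) (hCu : C ≤ M ^ N)
    (v : ℤ)
    (hv : IsLeast {j : ℤ | C ≤ M ^ j * m ^ ((N : ℤ) - j)} v) :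
    ∑ k, 1 / (c k) ^ 2 ≤
      ((N : ℝ) - v) / m ^ 2 + ((v : ℝ) - 1) / M ^ 2 +
        (m ^ ((N : ℤ) - v) * M ^ (v - 1) / C) ^ 2 := by
  obtain ⟨n, rfl⟩ : ∃ n, N = n + 1 := ⟨N - 1, by omega⟩
  obtain ⟨a, b, t, hab, htm, htM, hprod', hsum⟩ := key_smooth m M hm hmM n c hc
  have hM0 : 0 < M := lt_of_lt_of_le hm hmM
  have ht0 : 0 < t := lt_of_lt_of_le hm htm
  have hC0 : 0 < C := lt_of_lt_of_le (by positivity) hCl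
  have hCt : C ≤ m ^ a * M ^ b * t := by rw [hprod']; exact hprod
  -- b + 1 is in the set
  have hb1 : v ≤ (b : ℤ) + 1 := by
    apply hv.2
    show C ≤ M ^ ((b : ℤ) + 1) * m ^ ((↑(n+1) : ℤ) - ((b : ℤ) + 1))
    have e2 : ((↑(n+1) : ℤ) - ((b : ℤ) + 1)) = ((a : ℕ) : ℤ) := by push_cast; omega
    rw [e2]
    have e1 : ((b : ℤ) + 1) = ((b + 1 : ℕ) : ℤ) := by push_cast; ring
    rw [e1, zpow_natCast, zpow_natCast]
    calc C ≤ m ^ a * M ^ b * t := hCt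
      _ ≤ m ^ a * M ^ b * M := by
          have : (0:ℝ) < m ^ a * M ^ b := by positivity
          nlinarith
      _ = M ^ (b + 1) * m ^ a := by ring
  rcases eq_or_lt_of_le hb1 with hA | hB
  · -- case v = b + 1
    have e2 : ((↑(n+1) : ℤ) - v) = ((a : ℕ) : ℤ) := by push_cast; omega
    have e3 : v - 1 = ((b : ℕ) : ℤ) := by omega
    rw [e2, e3, zpow_natCast, zpow_natCast]
    have ev : (v : ℝ) = (b : ℝ) + 1 := by exact_mod_cast hA
    have eN : ((↑(n+1) : ℝ) - v) = (a : ℝ) := by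
      push_cast [ev]
      have : (a : ℝ) + b + 1 = (n : ℝ) + 1 := by exact_mod_cast hab
      linarith
    rw [eN]
    have h1 : 1 / t ≤ m ^ a * M ^ b / C := by
      rw [div_le_div_iff₀ ht0 hC0]
      nlinarith
    have h2 : 1 / t ^ 2 ≤ (m ^ a * M ^ b / C) ^ 2 := by
      calc 1 / t ^ 2 = (1 / t) ^ 2 := by rw [div_pow, one_pow]
        _ ≤ (m ^ a * M ^ b / C) ^ 2 := pow_le_pow_left₀ (by positivity) h1 2
    rw [ev]
    have ebb : ((b:ℝ) + 1 - 1) / M ^ 2 = (b:ℝ) / M ^ 2 := by ring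
    linarith
  · -- case v ≤ b
    have hvb : v ≤ (b : ℤ) := by omega
    set A := m ^ ((↑(n+1) : ℤ) - v) * M ^ (v - 1) with hAdef
    have hA0 : 0 < A := by positivity
    have hAM : A * M = M ^ v * m ^ ((↑(n+1) : ℤ) - v) := by
      rw [hAdef, zpow_sub_one₀ (ne_of_gt hM0)]
      field_simp
    have hCAM : C ≤ A * M := by rw [hAM]; exact hv.1
    have h2 : 1 / M ≤ A / C := by
      rw [div_le_div_iff₀ hM0 hC0]
      nlinarith
    have h3 : 1 / M ^ 2 ≤ (A / C) ^ 2 := by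
      calc 1 / M ^ 2 = (1 / M) ^ 2 := by rw [div_pow, one_pow]
        _ ≤ (A / C) ^ 2 := pow_le_pow_left₀ (by positivity) h2 2
    have h4 : 1 / t ^ 2 ≤ 1 / m ^ 2 :=
      one_div_le_one_div_of_le (by positivity) (pow_le_pow_left₀ hm.le htm 2)
    have h5 : 1 / M ^ 2 ≤ 1 / m ^ 2 :=
      one_div_le_one_div_of_le (by positivity) (pow_le_pow_left₀ hm.le hmM 2)
    have hvb' : (v : ℝ) ≤ (b : ℝ) := by exact_mod_cast hvb
    have hcast : (a : ℝ) + b + 1 = (n : ℝ) + 1 := by exact_mod_cast hab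
    have h6 : 0 ≤ ((b : ℝ) - v) * (1 / m ^ 2 - 1 / M ^ 2) :=
      mul_nonneg (by linarith) (by linarith)
    have hkey : (a : ℝ) / m ^ 2 + (b : ℝ) / M ^ 2 + 1 / m ^ 2 ≤
        ((↑(n+1) : ℝ) - v) / m ^ 2 + ((v : ℝ) - 1) / M ^ 2 + 1 / M ^ 2 := by
      have ha' : (a:ℝ) = (n:ℝ) - b := by linarith
      push_cast
      rw [ha']
      have e7 : ((n:ℝ) - b) / m ^ 2 = (n:ℝ) / m ^ 2 - (b:ℝ) / m ^ 2 := by ring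
      have e8 : ((n:ℝ) + 1 - v) / m ^ 2 =
          (n:ℝ) / m ^ 2 + 1 / m ^ 2 - (v:ℝ) / m ^ 2 := by ring
      have e9 : ((v:ℝ) - 1) / M ^ 2 = (v:ℝ) / M ^ 2 - 1 / M ^ 2 := by ring
      have e10 : (b:ℝ) / m ^ 2 - (v:ℝ) / m ^ 2 - ((b:ℝ) / M ^ 2 - (v:ℝ) / M ^ 2) =
          ((b : ℝ) - v) * (1 / m ^ 2 - 1 / M ^ 2) := by ring
      linarith
    push_cast at hkey ⊢
    linarith
end

section
/- Let a ∈ (0,1) and ζ ∈ ℂ with |ζ| ≤ 1, and set γ = (ζ - a)/(aζ - 1). If |γ| ≤ 1/(1 + a - a²), then |ζ - a| ≤ 1. -/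
theorem stmt_2 (a : ℝ) (ha : 0 < a) (ha1 : a < 1) (ζ : ℂ) (hζ : ‖ζ‖ ≤ 1)
    (hne : (a : ℂ) * ζ ≠ 1)
    (γ : ℂ) (hγ : γ = (ζ - (a : ℂ)) / ((a : ℂ) * ζ - 1))
    (hle : ‖γ‖ ≤ 1 / (1 + a - a ^ 2)) :
    ‖ζ - (a : ℂ)‖ ≤ 1 := by
  have hd : ((a : ℂ) * ζ - 1) ≠ 0 := sub_ne_zero.mpr hne
  have hpos : (0:ℝ) < 1 + a - a ^ 2 := by nlinarith
  set r := ‖ζ - (a : ℂ)‖ with hr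
  have heq : ‖ζ - (a : ℂ)‖ = ‖γ‖ * ‖(a : ℂ) * ζ - 1‖ := by
    rw [hγ, norm_div, div_mul_cancel₀]
    exact norm_ne_zero_iff.mpr hd
  have hden : ‖(a : ℂ) * ζ - 1‖ ≤ a * r + (1 - a ^ 2) := by
    have h1 : (a : ℂ) * ζ - 1 = (a : ℂ) * (ζ - (a:ℂ)) + ((a:ℂ)^2 - 1) := by ring
    rw [h1]
    calc ‖(a : ℂ) * (ζ - (a:ℂ)) + ((a:ℂ)^2 - 1)‖
        ≤ ‖(a : ℂ) * (ζ - (a:ℂ))‖ + ‖(a:ℂ)^2 - 1‖ :=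
          norm_add_le _ _
      _ = a * r + (1 - a ^ 2) := by
          rw [norm_mul]
          have : ((a:ℂ)^2 - 1) = ((a^2 - 1 : ℝ) : ℂ) := by push_cast; ring
          rw [this, Complex.norm_real, Complex.norm_real, Real.norm_eq_abs, Real.norm_eq_abs, abs_of_pos ha,
            abs_of_neg (by nlinarith : a^2 - 1 < 0)]
          ring
  have hkey : r ≤ (1 / (1 + a - a ^ 2)) * (a * r + (1 - a ^ 2)) := by
    have := mul_le_mul hle hden (norm_nonneg _)
      (le_of_lt (by positivity : (0:ℝ) < 1 / (1 + a - a ^ 2)))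
    exact heq.trans_le this
  rw [div_mul_eq_mul_div, one_mul, le_div_iff₀ hpos] at hkey
  have h2 : r * (1 - a ^ 2) ≤ 1 * (1 - a ^ 2) := by nlinarith
  exact le_of_mul_le_mul_right h2 (by nlinarith)
end

section
/- For m = 1/4 and any fixed a ∈ [0.845, 1], the function f(x) = (x² - 1)/((1 - x^{1/4})(a + x)²) is strictly increasing on the interval [0.46, 1), i.e., f'(x) > 0 for all x ∈ [0.46, 1). -/
lemma keyP (u a : ℝ) (hu0 : 0 < u) (hq : (1647:ℝ)/2000 ≤ u) (ha1 : a ≤ 1) :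
    0 < 8*u^3*(u^7+u^6+u^5+u^4+u^3+u^2+u+1)
      - (a+u^4)*(7*u^6+6*u^5+5*u^4+4*u^3+3*u^2+2*u+1) := by
  have hS : 0 < u^9 + (5647/2000)*u^8 + (21300609/4000000)*u^7 + (67082103023/8000000000)*u^6
      + (78484223678881/16000000000000)*u^5 + (129263516399117007/32000000000000000)*u^4
      + (340897011509345710529/64000000000000000000)*u^3
      + (1073457377955892385241263/128000000000000000000000)*u^2
      + (999984301493354758492360161/256000000000000000000000000)*u
      + (622974144559555287236917185167/512000000000000000000000000000) := by
    have h2 := pow_pos hu0 2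
    have h3 := pow_pos hu0 3
    have h4 := pow_pos hu0 4
    have h5 := pow_pos hu0 5
    have h6 := pow_pos hu0 6
    have h7 := pow_pos hu0 7
    have h8 := pow_pos hu0 8
    have h9 := pow_pos hu0 9
    linarith
  have hP : 0 < u^10+2*u^9+3*u^8+4*u^7-2*u^6+2*u^4+4*u^3-3*u^2-2*u-1 := by
    nlinarith [mul_nonneg (by linarith : (0:ℝ) ≤ u - 1647/2000) hS.le]
  have hSig : 0 ≤ 7*u^6+6*u^5+5*u^4+4*u^3+3*u^2+2*u+1 := by positivity
  nlinarith [mul_nonneg (by linarith : (0:ℝ) ≤ 1 - a) hSig, hP]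

set_option maxHeartbeats 1000000 in
theorem stmt_3 (a : ℝ) (ha : 0.845 ≤ a) (ha1 : a ≤ 1)
    (f : ℝ → ℝ)
    (hf : f = fun x => (x ^ 2 - 1) / ((1 - x ^ ((1 : ℝ) / 4)) * (a + x) ^ 2)) :
    ∀ x ∈ Set.Ico (0.46 : ℝ) 1, 0 < deriv f x := by
  intro x hx
  obtain ⟨hx1, hx2⟩ := hx
  have hx0 : (0:ℝ) < x := by norm_num at hx1 ⊢; linarith
  set F : ℝ → ℝ := fun y =>
    -((y + 1) * (1 + y ^ ((1:ℝ)/4) + (y ^ ((1:ℝ)/4)) ^ 2 + (y ^ ((1:ℝ)/4)) ^ 3)) / (a + y) ^ 2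
    with hF
  have hEqOn : Set.EqOn f F (Set.Ioo (0:ℝ) 1) := by
    intro y hy
    obtain ⟨hy0, hy1⟩ := hy
    set v := y ^ ((1:ℝ)/4) with hv
    have hv0 : 0 < v := Real.rpow_pos_of_pos hy0 _
    have hv4 : v ^ 4 = y := by
      rw [hv, ← Real.rpow_natCast (y ^ ((1:ℝ)/4)) 4, ← Real.rpow_mul hy0.le]
      norm_num
    have hv1 : v < 1 := by nlinarith [pow_pos hv0 2, pow_pos hv0 3]
    have hay : (0:ℝ) < a + y := by norm_num at ha; linarith
    simp only [hf, hF]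
    have hne1 : ((1:ℝ) - v) * (a + y) ^ 2 ≠ 0 :=
      ne_of_gt (mul_pos (by linarith) (by positivity))
    rw [div_eq_div_iff hne1 (by positivity)]
    linear_combination (-(y+1)*(a+y)^2) * hv4
  have hmem : Set.Ioo (0:ℝ) 1 ∈ nhds x := isOpen_Ioo.mem_nhds ⟨hx0, hx2⟩
  have hder : deriv f x = deriv F x :=
    Filter.EventuallyEq.deriv_eq (Filter.eventuallyEq_of_mem hmem hEqOn)
  rw [hder]
  set u := x ^ ((1:ℝ)/4) with hu
  have hu0 : 0 < u := Real.rpow_pos_of_pos hx0 _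
  have hu4 : u ^ 4 = x := by
    rw [hu, ← Real.rpow_natCast (x ^ ((1:ℝ)/4)) 4, ← Real.rpow_mul hx0.le]
    norm_num
  set d := x ^ ((1:ℝ)/4 - 1) with hdd
  have hd0 : 0 < d := Real.rpow_pos_of_pos hx0 _
  have hd : d * u ^ 3 = 1 := by
    rw [hdd, hu, ← Real.rpow_natCast (x ^ ((1:ℝ)/4)) 3, ← Real.rpow_mul hx0.le,
      ← Real.rpow_add hx0]
    norm_num
  have hax : (0:ℝ) < a + x := by norm_num at ha; linarith
  have hru : HasDerivAt (fun y : ℝ => y ^ ((1:ℝ)/4)) ((1:ℝ)/4 * d) x := by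
    have := Real.hasDerivAt_rpow_const (x := x) (p := (1:ℝ)/4) (Or.inl (ne_of_gt hx0))
    rw [hdd]
    exact this
  have h1 : HasDerivAt (fun y : ℝ =>
      (1:ℝ) + y ^ ((1:ℝ)/4) + (y ^ ((1:ℝ)/4)) ^ 2 + (y ^ ((1:ℝ)/4)) ^ 3)
      ((1:ℝ)/4*d + 2*u^1*((1:ℝ)/4*d) + 3*u^2*((1:ℝ)/4*d)) x := by
    have := ((hru.const_add 1).add (hru.pow 2)).add (hru.pow 3)
    refine this.congr_deriv ?_
    rw [← hu]
    push_cast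
    ring
  have h2 : HasDerivAt (fun y : ℝ => y + 1) 1 x := (hasDerivAt_id x).add_const 1
  have hN := ((h2.mul h1).neg)
  have hDen : HasDerivAt (fun y : ℝ => (a + y) ^ 2) (2 * (a + x)) x := by
    have := ((hasDerivAt_id x).const_add a).pow 2
    refine this.congr_deriv ?_
    simp
  have hFd := hN.div hDen (by positivity)
  rw [show deriv F x = _ from hFd.deriv]
  simp only [Pi.neg_apply, Pi.mul_apply]
  apply div_pos ?_ (by positivity)
  rw [← hu, ← hu4]
  have hq : (1647:ℝ)/2000 ≤ u := by
    by_contra h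
    push_neg at h
    have h4 : u ^ 4 < ((1647:ℝ)/2000) ^ 4 := by
      have := pow_lt_pow_left₀ h hu0.le (by norm_num : (4:ℕ) ≠ 0)
      simpa using this
    rw [hu4] at h4
    norm_num at hx1 h4
    linarith
  have hQ := keyP u a hu0 hq ha1
  have haxu : (0:ℝ) < a + u ^ 4 := by rw [hu4]; exact hax
  have h4u : (0:ℝ) < 4 * u ^ 3 := by positivity
  have hA : (-(1 * (1 + u + u ^ 2 + u ^ 3) +
        (u ^ 4 + 1) * (1 / 4 * d + 2 * u ^ 1 * (1 / 4 * d) + 3 * u ^ 2 * (1 / 4 * d))) *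
        (a + u ^ 4) ^ 2 -
      -((u ^ 4 + 1) * (1 + u + u ^ 2 + u ^ 3)) * (2 * (a + u ^ 4))) * (4 * u ^ 3)
      = (a + u ^ 4) * (8*u^3*(u^7+u^6+u^5+u^4+u^3+u^2+u+1)
        - (a+u^4)*(7*u^6+6*u^5+5*u^4+4*u^3+3*u^2+2*u+1)) := by
    linear_combination (-(u^4+1)*(1+2*u+3*u^2)*(a+u^4)^2) * hd
  nlinarith [hA, mul_pos haxu hQ, h4u]
end

section
/- For all a ∈ [0.845, 1] and R = 0.46, with λ = 1 - (1 - aR)^{1/9}, the inequality (9 - 4a²/(1+a²) - 6a)·(aR+1)/(R+a) - √(1 + (1-a²)λ(λ+2))·(1 + a - a²)^7 ≥ 0 holds. -/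
-- chord lemma for t^(1/9)
lemma chord9 (t : ℝ) (h1 : 0.54 ≤ t) (h2 : t ≤ 0.6114) :
    (0.8356 + 0.1817 * t) ^ (9:ℕ) ≤ t := by
  have hv : (0:ℝ) ≤ t - 0.54 := by linarith
  have hw : (0:ℝ) ≤ 0.6114 - t := by linarith
  nlinarith [mul_nonneg (pow_nonneg hv 1) hw, mul_nonneg (pow_nonneg hv 2) hw,
    mul_nonneg (pow_nonneg hv 3) hw, mul_nonneg (pow_nonneg hv 4) hw,
    mul_nonneg (pow_nonneg hv 5) hw, mul_nonneg (pow_nonneg hv 6) hw,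
    mul_nonneg (pow_nonneg hv 7) hw, mul_nonneg (pow_nonneg hv 8) hw]


set_option maxHeartbeats 2000000 in
lemma keypoly (a : ℝ) (ha : 0.845 ≤ a) (ha1 : a ≤ 1) :
    (1 + (1 - a^2) * (1 - 0.8356 - 0.1817 * (1 - a * 0.46)) *
        ((1 - 0.8356 - 0.1817 * (1 - a * 0.46)) + 2) / 2) * (1 + a - a^2)^7 *
        ((0.46 + a) * (1 + a^2))
      ≤ (9 * (1 + a^2) - 4 * a^2 - 6 * a * (1 + a^2)) * (a * 0.46 + 1) := by
  have hw : (0:ℝ) ≤ 1 - a := by linarith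
  have hu : (0:ℝ) ≤ a - 0.845 := by linarith
  nlinarith [mul_nonneg hw (pow_nonneg hu 0), mul_nonneg hw (pow_nonneg hu 1),
    mul_nonneg hw (pow_nonneg hu 2), mul_nonneg hw (pow_nonneg hu 3),
    mul_nonneg hw (pow_nonneg hu 4), mul_nonneg hw (pow_nonneg hu 5),
    mul_nonneg hw (pow_nonneg hu 6), mul_nonneg hw (pow_nonneg hu 7),
    mul_nonneg hw (pow_nonneg hu 8), mul_nonneg hw (pow_nonneg hu 9),
    mul_nonneg hw (pow_nonneg hu 10), mul_nonneg hw (pow_nonneg hu 11),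
    mul_nonneg hw (pow_nonneg hu 12), mul_nonneg hw (pow_nonneg hu 13),
    mul_nonneg hw (pow_nonneg hu 14), mul_nonneg hw (pow_nonneg hu 15),
    mul_nonneg hw (pow_nonneg hu 16), mul_nonneg hw (pow_nonneg hu 17),
    mul_nonneg hw (pow_nonneg hu 18), mul_nonneg hw (pow_nonneg hu 19),
    mul_nonneg hw (pow_nonneg hu 20),
    mul_nonneg (mul_nonneg hw hw) (pow_nonneg hu 1),
    mul_nonneg (mul_nonneg hw hw) (pow_nonneg hu 2),
    mul_nonneg (mul_nonneg hw hw) (pow_nonneg hu 3),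
    mul_nonneg (mul_nonneg hw hw) (pow_nonneg hu 4),
    mul_nonneg (mul_nonneg hw hw) (pow_nonneg hu 5),
    mul_nonneg (mul_nonneg hw hw) (pow_nonneg hu 6),
    mul_nonneg (mul_nonneg hw hw) (pow_nonneg hu 7),
    mul_nonneg (mul_nonneg hw hw) (pow_nonneg hu 8),
    mul_nonneg (mul_nonneg hw hw) (pow_nonneg hu 9),
    mul_nonneg (mul_nonneg hw hw) (pow_nonneg hu 10),
    mul_nonneg (mul_nonneg hw hw) (pow_nonneg hu 11),
    mul_nonneg (mul_nonneg hw hw) (pow_nonneg hu 12),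
    mul_nonneg (mul_nonneg hw hw) (pow_nonneg hu 13),
    mul_nonneg (mul_nonneg hw hw) (pow_nonneg hu 14),
    mul_nonneg (mul_nonneg hw hw) (pow_nonneg hu 15),
    mul_nonneg (mul_nonneg hw hw) (pow_nonneg hu 16),
    mul_nonneg (mul_nonneg hw hw) (pow_nonneg hu 17),
    mul_nonneg (mul_nonneg hw hw) (pow_nonneg hu 18),
    mul_nonneg (mul_nonneg hw hw) (pow_nonneg hu 19)]

set_option maxHeartbeats 1000000 in
theorem stmt_4 (a : ℝ) (ha : 0.845 ≤ a) (ha1 : a ≤ 1) :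
    let R : ℝ := 0.46
    let l : ℝ := 1 - (1 - a * R) ^ ((1 : ℝ) / 9)
    (9 - 4 * a ^ 2 / (1 + a ^ 2) - 6 * a) * (a * R + 1) / (R + a) -
      Real.sqrt (1 + (1 - a ^ 2) * l * (l + 2)) * (1 + a - a ^ 2) ^ 7 ≥ 0 := by
  intro R l
  have hR : R = (0.46:ℝ) := rfl
  have hl : l = 1 - (1 - a * 0.46) ^ ((1:ℝ)/9) := rfl
  clear_value R l
  have ht1 : (0.54:ℝ) ≤ 1 - a * 0.46 := by nlinarith
  have ht2 : 1 - a * 0.46 ≤ 0.6114 := by nlinarith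
  have htpos : (0:ℝ) < 1 - a * 0.46 := by linarith
  have hx0 : (0:ℝ) ≤ 0.8356 + 0.1817 * (1 - a * 0.46) := by nlinarith
  have h9 := chord9 (1 - a * 0.46) ht1 ht2
  -- chord bound on the rpow
  have hch : 0.8356 + 0.1817 * (1 - a * 0.46) ≤ (1 - a * 0.46) ^ ((1:ℝ)/9) := by
    have h := Real.rpow_le_rpow (pow_nonneg hx0 9) h9 (by norm_num : (0:ℝ) ≤ 1/9)
    rw [← Real.rpow_natCast (0.8356 + 0.1817 * (1 - a * 0.46)) 9,
      ← Real.rpow_mul hx0] at h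
    have e : ((9:ℕ):ℝ) * (1/9) = 1 := by norm_num
    rw [e, Real.rpow_one] at h
    exact h
  have hle1 : (1 - a * 0.46) ^ ((1:ℝ)/9) ≤ 1 :=
    Real.rpow_le_one (le_of_lt htpos) (by nlinarith) (by norm_num)
  have hl0 : 0 ≤ l := by rw [hl]; linarith
  obtain ⟨L, hLdef⟩ : ∃ L : ℝ, L = 1 - 0.8356 - 0.1817 * (1 - a * 0.46) := ⟨_, rfl⟩
  have hlL : l ≤ L := by rw [hl, hLdef]; linarith
  have ha2 : (0:ℝ) ≤ 1 - a ^ 2 := by nlinarith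
  have hL0 : 0 ≤ L := le_trans hl0 hlL
  have hXX : (1 - a^2) * l * (l + 2) ≤ (1 - a^2) * L * (L + 2) := by
    nlinarith [mul_nonneg (mul_nonneg ha2 (by linarith : (0:ℝ) ≤ L - l))
      (by linarith : (0:ℝ) ≤ L + l + 2)]
  have hX0 : 0 ≤ (1 - a^2) * l * (l + 2) :=
    mul_nonneg (mul_nonneg ha2 hl0) (by linarith)
  have hXL0 : 0 ≤ (1 - a^2) * L * (L + 2) :=
    mul_nonneg (mul_nonneg ha2 hL0) (by linarith)
  have hsq : Real.sqrt (1 + (1 - a^2) * l * (l + 2)) ≤ 1 + (1 - a^2) * L * (L + 2) / 2 := by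
    have h1 : Real.sqrt (1 + (1 - a^2) * l * (l + 2)) ≤
        Real.sqrt ((1 + (1 - a^2) * L * (L + 2) / 2)^2) := by
      apply Real.sqrt_le_sqrt
      nlinarith [hXX, hXL0, sq_nonneg ((1 - a^2) * L * (L + 2))]
    rwa [Real.sqrt_sq (by linarith)] at h1
  have hbase : (0:ℝ) < 1 + a - a ^ 2 := by nlinarith
  have hpow : (0:ℝ) ≤ (1 + a - a ^ 2) ^ 7 := by positivity
  have hmul : Real.sqrt (1 + (1 - a^2) * l * (l + 2)) * (1 + a - a ^ 2) ^ 7 ≤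
      (1 + (1 - a^2) * L * (L + 2) / 2) * (1 + a - a ^ 2) ^ 7 :=
    mul_le_mul_of_nonneg_right hsq hpow
  have hkey := keypoly a ha ha1
  have hden1 : (0:ℝ) < 0.46 + a := by linarith
  have hden2 : (0:ℝ) < 1 + a ^ 2 := by positivity
  have hfinal : (1 + (1 - a^2) * L * (L + 2) / 2) * (1 + a - a ^ 2) ^ 7 ≤
      (9 - 4 * a ^ 2 / (1 + a ^ 2) - 6 * a) * (a * 0.46 + 1) / (0.46 + a) := by
    rw [le_div_iff₀ hden1]
    have he : 9 - 4 * a ^ 2 / (1 + a ^ 2) - 6 * a =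
        (9 * (1 + a^2) - 4 * a^2 - 6 * a * (1 + a^2)) / (1 + a ^ 2) := by
      field_simp
    rw [he, div_mul_eq_mul_div, le_div_iff₀ hden2]
    calc (1 + (1 - a^2) * L * (L + 2) / 2) * (1 + a - a ^ 2) ^ 7 * (0.46 + a) * (1 + a ^ 2)
        = (1 + (1 - a^2) * L * (L + 2) / 2) * (1 + a - a^2) ^ 7 * ((0.46 + a) * (1 + a^2)) := by
          ring
      _ ≤ (9 * (1 + a^2) - 4 * a^2 - 6 * a * (1 + a^2)) * (a * 0.46 + 1) := by
          rw [hLdef]; exact keypoly a ha ha1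
  rw [hR]
  have : Real.sqrt (1 + (1 - a ^ 2) * l * (l + 2)) * (1 + a - a ^ 2) ^ 7 ≤
      (9 - 4 * a ^ 2 / (1 + a ^ 2) - 6 * a) * (a * 0.46 + 1) / (0.46 + a) :=
    le_trans hmul hfinal
  linarith
end

section
/- For a ∈ [0.845, 1], setting λ = 1 - (1 - 0.46a)^{1/9}, one has λ ≤ sin(π/9). -/
open Real

theorem stmt_5 (a : ℝ) (ha : 0.845 ≤ a) (ha1 : a ≤ 1) :
    1 - (1 - 0.46 * a) ^ ((1 : ℝ) / 9) ≤ Real.sin (π / 9) := by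
  have h9 : ((0.7:ℝ)^(9:ℕ)) ≤ 1 - 0.46 * a := by nlinarith
  have hr : (0.7:ℝ) ≤ (1 - 0.46 * a) ^ ((1 : ℝ) / 9) := by
    have := Real.rpow_le_rpow (by positivity) h9 (by norm_num : (0:ℝ) ≤ 1/9)
    rwa [← Real.rpow_natCast (0.7:ℝ) 9, ← Real.rpow_mul (by norm_num),
      (by norm_num : ((9:ℕ):ℝ) * (1/9) = 1), Real.rpow_one] at this
  have hπl : (3.141592:ℝ) < π := Real.pi_gt_d6
  have hπu : π < 3.15 := Real.pi_lt_d2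
  have hsin : π / 9 - (π/9)^3 / 4 < Real.sin (π / 9) :=
    by
      have h := Real.sin_gt_sub_cube (x := π / 9) (by linarith)
      have hp : (0:ℝ) ≤ (π/9)^3 := by positivity
      linarith
  have hcube : (π/9)^3 ≤ (0.35:ℝ)^3 := by
    have : π/9 ≤ 0.35 := by linarith
    gcongr
  nlinarith
end
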